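/- Let (Ω, ℱ, μ) be a probability space, b ≥ 0, c ≥ 0, and Y : Ω → ℝ a random variable with |Y| ≤ b μ-almost everywhere. Let w⁺, w⁻ : [0,1] → [0,1] be nondecreasing with w⁺(0) = w⁻(0) = 0 and w⁺(1) = w⁻(1) = 1, and define ρ(X) := ∫₀^∞ w⁺(μ{X > z}) dz − ∫₀^∞ w⁻(μ{X < −z}) dz for bounded random variables X. Then 0 ≤ ρ(Y + c) − ρ(Y) ≤ 2c. -/

import Mathlib

open MeasureTheory

/-- The CPT-value with identity utilities:
`ρ(X) := ∫₀^∞ w⁺(μ{X > z}) dz − ∫₀^∞ w⁻(μ{X < −z}) dz`. -/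
noncomputable def cptId {Ω : Type*} [MeasurableSpace Ω] (μ : Measure Ω)
    (wPos wNeg : ℝ → ℝ) (X : Ω → ℝ) : ℝ :=
  (∫ z in Set.Ioi (0 : ℝ), wPos ((μ {ω | z < X ω}).toReal)) -
    ∫ z in Set.Ioi (0 : ℝ), wNeg ((μ {ω | X ω < -z}).toReal)

/-- Translation of a set integral over `Ioi`. -/
lemma cpt_aux_shift (f : ℝ → ℝ) (a c : ℝ) :
    (∫ z in Set.Ioi a, f (z - c)) = ∫ z in Set.Ioi (a - c), f z := by
  rw [← integral_indicator measurableSet_Ioi, ← integral_indicator measurableSet_Ioi,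
    ← integral_sub_right_eq_self (Set.indicator (Set.Ioi (a - c)) f) c]
  congr 1
  ext z
  simp only [Set.indicator_apply, Set.mem_Ioi, sub_lt_sub_iff_right]

theorem cptId_shift_estimate {Ω : Type*} [MeasurableSpace Ω] (μ : Measure Ω)
    [IsProbabilityMeasure μ]
    (b c : ℝ) (hb : 0 ≤ b) (hc : 0 ≤ c)
    (Y : Ω → ℝ) (hY : ∀ᵐ ω ∂μ, |Y ω| ≤ b)
    (wPos wNeg : ℝ → ℝ)
    (hwPosMono : MonotoneOn wPos (Set.Icc 0 1)) (hwPos0 : wPos 0 = 0) (hwPos1 : wPos 1 = 1)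
    (hwNegMono : MonotoneOn wNeg (Set.Icc 0 1)) (hwNeg0 : wNeg 0 = 0) (hwNeg1 : wNeg 1 = 1) :
    0 ≤ cptId μ wPos wNeg (fun ω => Y ω + c) - cptId μ wPos wNeg Y ∧
      cptId μ wPos wNeg (fun ω => Y ω + c) - cptId μ wPos wNeg Y ≤ 2 * c := by
  classical
  set Fp : ℝ → ℝ := fun z => wPos ((μ {ω | z < Y ω}).toReal) with hFp
  set Fn : ℝ → ℝ := fun z => wNeg ((μ {ω | Y ω < -z}).toReal) with hFn
  have hμmem : ∀ s : Set Ω, (μ s).toReal ∈ Set.Icc (0:ℝ) 1 := by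
    intro s
    constructor
    · exact ENNReal.toReal_nonneg
    · exact ENNReal.toReal_le_of_le_ofReal zero_le_one (by simpa using prob_le_one (μ := μ) (s := s))
  have hμmono : ∀ s t : Set Ω, s ⊆ t → (μ s).toReal ≤ (μ t).toReal :=
    fun s t h => ENNReal.toReal_mono (measure_ne_top μ t) (measure_mono h)
  -- bounds on Fp, Fn
  have hFp01 : ∀ z, Fp z ∈ Set.Icc (0:ℝ) 1 := by
    intro z
    constructor
    · calc (0:ℝ) = wPos 0 := hwPos0.symm
      _ ≤ Fp z := hwPosMono (by norm_num) (hμmem _) (hμmem _).1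
    · calc Fp z ≤ wPos 1 := hwPosMono (hμmem _) (by norm_num) (hμmem _).2
      _ = 1 := hwPos1
  have hFn01 : ∀ z, Fn z ∈ Set.Icc (0:ℝ) 1 := by
    intro z
    constructor
    · calc (0:ℝ) = wNeg 0 := hwNeg0.symm
      _ ≤ Fn z := hwNegMono (by norm_num) (hμmem _) (hμmem _).1
    · calc Fn z ≤ wNeg 1 := hwNegMono (hμmem _) (by norm_num) (hμmem _).2
      _ = 1 := hwNeg1
  -- antitonicity
  have hFpAnti : Antitone Fp := by
    intro z z' hzz'
    exact hwPosMono (hμmem _) (hμmem _)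
      (hμmono _ _ (fun ω hω => lt_of_le_of_lt hzz' hω))
  have hFnAnti : Antitone Fn := by
    intro z z' hzz'
    refine hwNegMono (hμmem _) (hμmem _) (hμmono _ _ (fun ω hω => ?_))
    simp only [Set.mem_setOf_eq] at hω ⊢
    linarith
  -- null set
  have hN : μ {ω | ¬ |Y ω| ≤ b} = 0 := by
    rw [ae_iff] at hY; exact hY
  have hFp0 : ∀ z, b ≤ z → Fp z = 0 := by
    intro z hz
    have : μ {ω | z < Y ω} = 0 := by
      refine measure_mono_null (fun ω hω => ?_) hN
      simp only [Set.mem_setOf_eq] at *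
      intro habs
      have := le_abs_self (Y ω)
      linarith [habs, abs_le.mp habs]
    simp [hFp, this, hwPos0]
  have hFn0 : ∀ z, b ≤ z → Fn z = 0 := by
    intro z hz
    have : μ {ω | Y ω < -z} = 0 := by
      refine measure_mono_null (fun ω hω => ?_) hN
      simp only [Set.mem_setOf_eq] at *
      intro habs
      have := neg_abs_le (Y ω)
      linarith [abs_le.mp habs]
    simp [hFn, this, hwNeg0]
  -- integrability
  have hInt : ∀ (F : ℝ → ℝ), Antitone F → (∀ z, F z ∈ Set.Icc (0:ℝ) 1) →
      (∀ z, b ≤ z → F z = 0) → ∀ a : ℝ, IntegrableOn F (Set.Ioi a) := by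
    intro F hanti h01 h0 a
    have hm : Measurable F := hanti.measurable
    set m := max a b with hm'
    have h1 : IntegrableOn F (Set.Ioc a m) := by
      refine Measure.integrableOn_of_bounded (measure_Ioc_lt_top).ne
        hm.aestronglyMeasurable (M := 1) ?_
      filter_upwards with z
      rw [Real.norm_eq_abs, abs_le]
      exact ⟨by linarith [(h01 z).1], (h01 z).2⟩
    have h2 : IntegrableOn F (Set.Ioi m) := by
      apply (integrable_zero _ _ _).congr
      filter_upwards [ae_restrict_mem measurableSet_Ioi] with z hz
      exact (h0 z (le_of_lt (lt_of_le_of_lt (le_max_right a b) hz))).symm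
    have : Set.Ioc a m ∪ Set.Ioi m = Set.Ioi a := Set.Ioc_union_Ioi_eq_Ioi (le_max_left a b)
    rw [← this]
    exact h1.union h2
  have hIntFp := hInt Fp hFpAnti hFp01 hFp0
  have hIntFn := hInt Fn hFnAnti hFn01 hFn0
  -- rewrite cptId of shifted variable
  have hshiftP : (∫ z in Set.Ioi (0:ℝ), wPos ((μ {ω | z < Y ω + c}).toReal))
      = ∫ z in Set.Ioi (-c : ℝ), Fp z := by
    have h1 : (∫ z in Set.Ioi (0:ℝ), wPos ((μ {ω | z < Y ω + c}).toReal))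
        = ∫ z in Set.Ioi (0:ℝ), Fp (z - c) := by
      apply setIntegral_congr_fun measurableSet_Ioi
      intro z _
      have hset : {ω | z < Y ω + c} = {ω | z - c < Y ω} := by
        ext ω; simp only [Set.mem_setOf_eq]; constructor <;> intro h <;> linarith
      simp only [hFp, hset]
    rw [h1, cpt_aux_shift Fp 0 c, zero_sub]
  have hshiftN : (∫ z in Set.Ioi (0:ℝ), wNeg ((μ {ω | Y ω + c < -z}).toReal))
      = ∫ z in Set.Ioi (c : ℝ), Fn z := by
    have h1 : (∫ z in Set.Ioi (0:ℝ), wNeg ((μ {ω | Y ω + c < -z}).toReal))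
        = ∫ z in Set.Ioi (0:ℝ), Fn (z - (-c)) := by
      apply setIntegral_congr_fun measurableSet_Ioi
      intro z _
      have hset : {ω | Y ω + c < -z} = {ω | Y ω < -(z - -c)} := by
        ext ω; simp only [Set.mem_setOf_eq]; constructor <;> intro h <;> linarith
      simp only [hFn, hset]
    rw [h1, cpt_aux_shift Fn 0 (-c), zero_sub, neg_neg]
  -- decompositions
  have hdecP : (∫ z in Set.Ioi (-c:ℝ), Fp z)
      = (∫ z in Set.Ioc (-c:ℝ) 0, Fp z) + ∫ z in Set.Ioi (0:ℝ), Fp z := by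
    rw [← setIntegral_union (Set.Ioc_disjoint_Ioi le_rfl) measurableSet_Ioi
      ((hIntFp (-c)).mono_set Set.Ioc_subset_Ioi_self) (hIntFp 0),
      Set.Ioc_union_Ioi_eq_Ioi (by linarith)]
  have hdecN : (∫ z in Set.Ioi (0:ℝ), Fn z)
      = (∫ z in Set.Ioc (0:ℝ) c, Fn z) + ∫ z in Set.Ioi (c:ℝ), Fn z := by
    rw [← setIntegral_union (Set.Ioc_disjoint_Ioi le_rfl) measurableSet_Ioi
      ((hIntFn 0).mono_set Set.Ioc_subset_Ioi_self) (hIntFn c),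
      Set.Ioc_union_Ioi_eq_Ioi (by linarith)]
  have hkey : cptId μ wPos wNeg (fun ω => Y ω + c) - cptId μ wPos wNeg Y
      = (∫ z in Set.Ioc (-c:ℝ) 0, Fp z) + ∫ z in Set.Ioc (0:ℝ) c, Fn z := by
    simp only [cptId]
    rw [hshiftP, hshiftN, hdecP, hdecN]
    ring
  -- bounds on the two pieces
  have hboundgen : ∀ (F : ℝ → ℝ) (u v : ℝ), u ≤ v → IntegrableOn F (Set.Ioc u v) →
      (∀ z, F z ∈ Set.Icc (0:ℝ) 1) →
      0 ≤ (∫ z in Set.Ioc u v, F z) ∧ (∫ z in Set.Ioc u v, F z) ≤ v - u := by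
    intro F u v huv hint h01
    constructor
    · apply setIntegral_nonneg measurableSet_Ioc
      intro z _; exact (h01 z).1
    · calc (∫ z in Set.Ioc u v, F z) ≤ ∫ _z in Set.Ioc u v, (1:ℝ) := by
            apply setIntegral_mono_on hint (integrableOn_const measure_Ioc_lt_top.ne)
              measurableSet_Ioc
            intro z _; exact (h01 z).2
      _ = v - u := by
            simp [Real.volume_Ioc, ENNReal.toReal_ofReal (by linarith : (0:ℝ) ≤ v - u), huv]
  have hP := hboundgen Fp (-c) 0 (by linarith) ((hIntFp (-c)).mono_set Set.Ioc_subset_Ioi_self) hFp01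
  have hN' := hboundgen Fn 0 c hc ((hIntFn 0).mono_set Set.Ioc_subset_Ioi_self) hFn01
  rw [hkey]
  constructor
  · linarith [hP.1, hN'.1]
  · have := hP.2
    have := hN'.2
    linarith
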